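/- With Y multiplication by x, Z the formal derivative on ℂ[x], H = Y∘Z, G = R(H)∘Z for a fixed polynomial R of degree d, and P_n^R = e^G(x^n): the operator G is a lowering operator, G(P_n^R) = n·R(n−1)·P_{n−1}^R for all n ≥ 1 and G(P_0^R) = 0; the operator M = e^G∘Y∘e^{−G} is a raising operator, M(P_n^R) = P_{n+1}^R for all n ∈ ℕ; and the Rodrigues-type formula P_n^R = M^n(1) holds. -/

import Mathlib

open Polynomial Finset

noncomputable section

/-- `E` is the ℂ-algebra of ℂ-linear endomorphisms of `ℂ[x]`. -/
abbrev E := Module.End ℂ (Polynomial ℂ)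

/-- `Y`: multiplication by `x`. -/
def Yop : E := LinearMap.mulLeft ℂ (X : Polynomial ℂ)

/-- `Z`: the formal derivative. -/
def Zop : E := Polynomial.derivative

/-- `H = Y ∘ Z`. -/
def Hop : E := Yop * Zop

/-- `G = R(H) ∘ Z`. -/
def Gop (R : Polynomial ℂ) : E := aeval Hop R * Zop

/-- `e^A p = Σ_{j≥0} A^j p / j!` for a degree-lowering operator `A`;
the series is the finite sum over `j ≤ deg p`. -/
def expOp (A : E) (p : Polynomial ℂ) : Polynomial ℂ :=
  ∑ j ∈ range (p.natDegree + 1), (j.factorial : ℂ)⁻¹ • (A ^ j) p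

/-- `P_n^R = e^G(x^n)`. -/
def PR (R : Polynomial ℂ) (n : ℕ) : Polynomial ℂ :=
  expOp (Gop R) (X ^ n : Polynomial ℂ)

/-- The raising operator `M = e^G ∘ Y ∘ e^{−G}`. -/
def Mop (R : Polynomial ℂ) : Polynomial ℂ → Polynomial ℂ :=
  fun p => expOp (Gop R) (X * expOp (-(Gop R)) p)

section Aux

variable (R : Polynomial ℂ)

lemma Hop_apply (p : Polynomial ℂ) : Hop p = X * derivative p := rfl

lemma Gop_apply (p : Polynomial ℂ) : Gop R p = aeval Hop R (derivative p) := rfl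

lemma Hop_X_pow (m : ℕ) : Hop (X ^ m : Polynomial ℂ) = (m : ℂ) • X ^ m := by
  rw [Hop_apply, derivative_X_pow, smul_eq_C_mul]
  cases m with
  | zero => simp
  | succ m => rw [Nat.add_sub_cancel]; ring

lemma Hop_pow_X_pow (k m : ℕ) : (Hop ^ k) (X ^ m : Polynomial ℂ) = ((m : ℂ) ^ k) • X ^ m := by
  induction k with
  | zero => simp
  | succ k ih =>
    rw [pow_succ, Module.End.mul_apply, Hop_X_pow, map_smul, ih, smul_smul, pow_succ]
    ring_nf

lemma aeval_Hop_X_pow (m : ℕ) :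
    (aeval Hop R) (X ^ m : Polynomial ℂ) = R.eval (m : ℂ) • X ^ m := by
  rw [aeval_eq_sum_range, eval_eq_sum_range, LinearMap.sum_apply, Finset.sum_smul]
  refine Finset.sum_congr rfl fun i _ => ?_
  rw [LinearMap.smul_apply, Hop_pow_X_pow, smul_smul]

lemma Gop_X_pow (n : ℕ) :
    Gop R (X ^ n : Polynomial ℂ) = ((n : ℂ) * R.eval ((n : ℂ) - 1)) • X ^ (n - 1) := by
  rw [Gop_apply, derivative_X_pow, ← smul_eq_C_mul, map_smul, aeval_Hop_X_pow]
  cases n with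
  | zero => simp
  | succ n =>
    rw [smul_smul, Nat.add_sub_cancel]
    push_cast
    ring_nf

lemma Gop_pow_X_pow_zero :
    ∀ m j : ℕ, m < j → ((Gop R) ^ j) (X ^ m : Polynomial ℂ) = 0 := by
  intro m
  induction m with
  | zero =>
    intro j hj
    obtain ⟨k, rfl⟩ : ∃ k, j = k + 1 := ⟨j - 1, (Nat.succ_pred_eq_of_pos hj).symm⟩
    rw [pow_succ, Module.End.mul_apply, Gop_X_pow]
    simp
  | succ m ih =>
    intro j hj
    obtain ⟨k, rfl⟩ : ∃ k, j = k + 1 := ⟨j - 1, (Nat.succ_pred_eq_of_pos (by omega)).symm⟩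
    rw [pow_succ, Module.End.mul_apply, Gop_X_pow, map_smul, Nat.add_sub_cancel,
      ih k (by omega), smul_zero]

lemma Gop_pow_X_pow_ex (j : ℕ) :
    ∀ m : ℕ, ∃ c : ℂ, ((Gop R) ^ j) (X ^ m : Polynomial ℂ) = c • X ^ (m - j) := by
  induction j with
  | zero => exact fun m => ⟨1, by simp⟩
  | succ j ih =>
    intro m
    obtain ⟨c, hc⟩ := ih (m - 1)
    refine ⟨((m : ℂ) * R.eval ((m : ℂ) - 1)) * c, ?_⟩
    rw [pow_succ, Module.End.mul_apply, Gop_X_pow, map_smul, hc, smul_smul]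
    congr 2
    omega

lemma natDegree_Gop_pow_le (j : ℕ) (p : Polynomial ℂ) :
    (((Gop R) ^ j) p).natDegree ≤ p.natDegree := by
  conv_lhs => rw [p.as_sum_range]
  rw [map_sum]
  apply Polynomial.natDegree_sum_le_of_forall_le
  intro i hi
  rw [← smul_X_eq_monomial, map_smul]
  obtain ⟨c, hc⟩ := Gop_pow_X_pow_ex R j i
  rw [hc]
  refine le_trans (natDegree_smul_le _ _) (le_trans (natDegree_smul_le _ _) ?_)
  rw [natDegree_X_pow]
  simp only [mem_range] at hi
  omega

lemma Gop_pow_zero (p : Polynomial ℂ) (j : ℕ) (h : p.natDegree < j) :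
    ((Gop R) ^ j) p = 0 := by
  conv_lhs => rw [p.as_sum_range]
  rw [map_sum]
  apply Finset.sum_eq_zero
  intro i hi
  simp only [mem_range] at hi
  rw [← smul_X_eq_monomial, map_smul, Gop_pow_X_pow_zero R i j (by omega), smul_zero]

lemma expOp_eq_sum (A : E) (p : Polynomial ℂ) (N : ℕ) (hN : p.natDegree < N)
    (h0 : ∀ j, p.natDegree < j → (A ^ j) p = 0) :
    expOp A p = ∑ j ∈ range N, (j.factorial : ℂ)⁻¹ • (A ^ j) p := by
  unfold expOp
  apply Finset.sum_subset
  · exact range_subset_range.2 hN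
  · intro j _ hj
    simp only [mem_range] at hj
    rw [h0 j (by omega), smul_zero]

lemma expOp_smul (A : E) (c : ℂ) (p : Polynomial ℂ) :
    expOp A (c • p) = c • expOp A p := by
  rcases eq_or_ne c 0 with rfl | hc
  · simp [expOp]
  · have hdeg : (c • p).natDegree = p.natDegree := by
      refine le_antisymm (natDegree_smul_le _ _) ?_
      conv_lhs => rw [show p = c⁻¹ • (c • p) by rw [smul_smul, inv_mul_cancel₀ hc, one_smul]]
      exact natDegree_smul_le _ _
    unfold expOp
    rw [hdeg, Finset.smul_sum]
    refine Finset.sum_congr rfl fun j _ => ?_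
    rw [map_smul, smul_comm]

lemma natDegree_expOp_le (p : Polynomial ℂ) :
    (expOp (Gop R) p).natDegree ≤ p.natDegree := by
  unfold expOp
  apply Polynomial.natDegree_sum_le_of_forall_le
  intro j _
  exact le_trans (natDegree_smul_le _ _) (natDegree_Gop_pow_le R j p)

lemma Gop_expOp_comm (p : Polynomial ℂ) :
    Gop R (expOp (Gop R) p) = expOp (Gop R) (Gop R p) := by
  have hd : (Gop R p).natDegree ≤ p.natDegree := by
    have := natDegree_Gop_pow_le R 1 p
    rwa [pow_one] at this
  have h2 : expOp (Gop R) (Gop R p)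
      = ∑ j ∈ range (p.natDegree + 1), (j.factorial : ℂ)⁻¹ • ((Gop R) ^ j) (Gop R p) :=
    expOp_eq_sum (Gop R) (Gop R p) (p.natDegree + 1) (by omega)
      (fun j hj => Gop_pow_zero R _ j hj)
  rw [h2]
  unfold expOp
  rw [map_sum]
  refine Finset.sum_congr rfl fun j _ => ?_
  rw [map_smul]
  congr 1
  rw [← Module.End.mul_apply, ← Module.End.mul_apply, ← pow_succ', ← pow_succ]

lemma neg_pow_apply (A : E) (j : ℕ) : ∀ p : Polynomial ℂ,
    ((-A) ^ j) p = ((-1 : ℂ) ^ j) • (A ^ j) p := by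
  induction j with
  | zero => intro p; simp
  | succ j ih =>
    intro p
    have h : ((-A) ^ (j + 1)) p = -(((-A) ^ j) (A p)) := by
      rw [pow_succ, Module.End.mul_apply, LinearMap.neg_apply, map_neg]
    rw [h, ih, pow_succ, pow_succ, Module.End.mul_apply, ← neg_smul]
    congr 1
    ring

lemma alt_sum_eq (m : ℕ) (hm : m ≠ 0) :
    ∑ k ∈ range (m + 1), ((-1 : ℂ) ^ k * (k.factorial : ℂ)⁻¹) * ((m - k).factorial : ℂ)⁻¹
      = 0 := by
  have key : ∀ k ∈ range (m + 1),
      ((-1 : ℂ) ^ k * (k.factorial : ℂ)⁻¹) * ((m - k).factorial : ℂ)⁻¹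
        = (m.factorial : ℂ)⁻¹ * ((-1 : ℂ) ^ k * (m.choose k : ℂ)) := by
    intro k hk
    simp only [mem_range] at hk
    have hc : ((m.choose k : ℂ)) * (k.factorial : ℂ) * ((m - k).factorial : ℂ)
        = (m.factorial : ℂ) := by
      exact_mod_cast congrArg (Nat.cast : ℕ → ℂ)
        (Nat.choose_mul_factorial_mul_factorial (by omega : k ≤ m))
    have h1 : (k.factorial : ℂ) ≠ 0 := Nat.cast_ne_zero.mpr k.factorial_ne_zero
    have h2 : ((m - k).factorial : ℂ) ≠ 0 := Nat.cast_ne_zero.mpr (m - k).factorial_ne_zero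
    have h3 : (m.factorial : ℂ) ≠ 0 := Nat.cast_ne_zero.mpr m.factorial_ne_zero
    field_simp
    linear_combination (-1 : ℂ) * hc
  rw [Finset.sum_congr rfl key, ← Finset.mul_sum]
  have h := Int.alternating_sum_range_choose (n := m)
  rw [if_neg hm] at h
  have h' := congrArg (Int.cast : ℤ → ℂ) h
  push_cast at h'
  rw [h', mul_zero]

lemma expOp_neg_expOp (p : Polynomial ℂ) :
    expOp (-(Gop R)) (expOp (Gop R) p) = p := by
  have hA : ∀ q : Polynomial ℂ,
      (aeval (Gop R) (∑ j ∈ range (p.natDegree + 1), monomial j ((j.factorial : ℂ)⁻¹))) q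
        = ∑ j ∈ range (p.natDegree + 1), (j.factorial : ℂ)⁻¹ • ((Gop R) ^ j) q := by
    intro q
    rw [map_sum, LinearMap.sum_apply]
    refine Finset.sum_congr rfl fun j _ => ?_
    rw [aeval_monomial, ← Algebra.smul_def, LinearMap.smul_apply]
  have hB : ∀ q : Polynomial ℂ,
      (aeval (Gop R) (∑ j ∈ range (p.natDegree + 1),
          monomial j ((-1 : ℂ) ^ j * (j.factorial : ℂ)⁻¹))) q
        = ∑ j ∈ range (p.natDegree + 1),
            ((-1 : ℂ) ^ j * (j.factorial : ℂ)⁻¹) • ((Gop R) ^ j) q := by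
    intro q
    rw [map_sum, LinearMap.sum_apply]
    refine Finset.sum_congr rfl fun j _ => ?_
    rw [aeval_monomial, ← Algebra.smul_def, LinearMap.smul_apply]
  set N := p.natDegree + 1 with hNdef
  set A : Polynomial ℂ := ∑ j ∈ range N, monomial j ((j.factorial : ℂ)⁻¹) with hAdef
  set B : Polynomial ℂ := ∑ j ∈ range N, monomial j ((-1 : ℂ) ^ j * (j.factorial : ℂ)⁻¹)
    with hBdef
  have h1 : expOp (Gop R) p = (aeval (Gop R) A) p := (hA p).symm
  have hqd : (expOp (Gop R) p).natDegree < N := by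
    have := natDegree_expOp_le R p
    omega
  have h2 : expOp (-(Gop R)) (expOp (Gop R) p) = (aeval (Gop R) B) (expOp (Gop R) p) := by
    rw [expOp_eq_sum (-(Gop R)) _ N hqd (fun j hj => by
      rw [neg_pow_apply, Gop_pow_zero R _ j hj, smul_zero]), hB]
    refine Finset.sum_congr rfl fun j _ => ?_
    rw [neg_pow_apply, smul_smul, mul_comm]
  have hcoeffA : ∀ m, A.coeff m = if m < N then (m.factorial : ℂ)⁻¹ else 0 := by
    intro m
    rw [hAdef, finset_sum_coeff]
    simp [coeff_monomial, Finset.sum_ite_eq, mem_range]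
  have hcoeffB : ∀ m, B.coeff m
      = if m < N then (-1 : ℂ) ^ m * (m.factorial : ℂ)⁻¹ else 0 := by
    intro m
    rw [hBdef, finset_sum_coeff]
    simp [coeff_monomial, Finset.sum_ite_eq, mem_range]
  have hc0 : (B * A).coeff 0 = 1 := by
    rw [mul_coeff_zero, hcoeffA, hcoeffB]
    simp [hNdef]
  have hcm : ∀ m, 1 ≤ m → m < N → (B * A).coeff m = 0 := by
    intro m hm1 hmN
    rw [coeff_mul, Finset.Nat.sum_antidiagonal_eq_sum_range_succ_mk]
    have : ∀ k ∈ range (m + 1), B.coeff k * A.coeff (m - k)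
        = ((-1 : ℂ) ^ k * (k.factorial : ℂ)⁻¹) * (((m - k).factorial : ℂ))⁻¹ := by
      intro k hk
      simp only [mem_range] at hk
      rw [hcoeffB, hcoeffA, if_pos (by omega), if_pos (by omega)]
    rw [Finset.sum_congr rfl this]
    exact alt_sum_eq m (by omega)
  rw [h2, h1, ← Module.End.mul_apply, ← map_mul, aeval_eq_sum_range, LinearMap.sum_apply]
  rw [Finset.sum_eq_single 0]
  · rw [LinearMap.smul_apply, hc0, pow_zero, Module.End.one_apply, one_smul]
  · intro i _ hi
    rcases lt_or_ge i N with h | h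
    · rw [LinearMap.smul_apply, hcm i (by omega) h, zero_smul]
    · rw [LinearMap.smul_apply, Gop_pow_zero R p i (by omega), smul_zero]
  · intro h0
    exact absurd (mem_range.mpr (Nat.succ_pos _)) h0

lemma PR_zero : PR R 0 = 1 := by
  show expOp (Gop R) (X ^ 0 : Polynomial ℂ) = 1
  simp [expOp]

end Aux

/-- Ladder operators and the Rodrigues-type formula for the `P_n^R`. -/
theorem PR_ladder (R : Polynomial ℂ) (d : ℕ) (hR : R.natDegree = d) :
    (∀ n : ℕ, 1 ≤ n →
      Gop R (PR R n) = ((n : ℂ) * R.eval ((n : ℂ) - 1)) • PR R (n - 1)) ∧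
    Gop R (PR R 0) = 0 ∧
    (∀ n : ℕ, Mop R (PR R n) = PR R (n + 1)) ∧
    (∀ n : ℕ, (Mop R)^[n] (1 : Polynomial ℂ) = PR R n) := by
  have hPR : ∀ n : ℕ, PR R n = expOp (Gop R) (X ^ n) := fun n => rfl
  have hM : ∀ n : ℕ, Mop R (PR R n) = PR R (n + 1) := by
    intro n
    show expOp (Gop R) (X * expOp (-(Gop R)) (PR R n)) = _
    rw [hPR, expOp_neg_expOp, ← pow_succ', ← hPR]
  refine ⟨?_, ?_, hM, ?_⟩
  · intro n _
    rw [hPR, Gop_expOp_comm, Gop_X_pow, expOp_smul, ← hPR]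
  · rw [hPR, Gop_expOp_comm, Gop_X_pow]
    norm_num
    simp [expOp]
  · intro n
    induction n with
    | zero => simpa using (PR_zero R).symm
    | succ n ih => rw [Function.iterate_succ_apply', ih, hM]

end
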